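/- Let (a_1,…,a_m) be a telescopic sequence. Then for every element a of the numerical semigroup S = a_1ℤ_{≥0} + ⋯ + a_mℤ_{≥0} there exists a unique tuple (k_1,…,k_m) ∈ B(A_m) such that a_1k_1 + ⋯ + a_mk_m = a. Equivalently, the map B(A_m) → ℤ_{≥0}, (k_1,…,k_m) ↦ Σ_{i=1}^m a_ik_i, is injective with image S. -/

import Mathlib

/-- `dseq a i = gcd(a_1, …, a_i)`. -/
def dseq (a : ℕ → ℕ) (i : ℕ) : ℕ := (Finset.Icc 1 i).gcd a

/-- The telescopic condition:
`a_i/d_i ∈ (a_1/d_{i-1})ℤ_{≥0} + ⋯ + (a_{i-1}/d_{i-1})ℤ_{≥0}` for `2 ≤ i ≤ m`. -/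
def Telescopic (m : ℕ) (a : ℕ → ℕ) : Prop :=
  ∀ i, 2 ≤ i → i ≤ m →
    ∃ k : ℕ → ℕ,
      a i / dseq a i = ∑ j ∈ Finset.Icc 1 (i - 1), (a j / dseq a (i - 1)) * k j

/-- Membership in `B(A_m)`: `0 ≤ l_i ≤ d_{i-1}/d_i - 1` for `2 ≤ i ≤ m`
(`l_1` is unrestricted). -/
def InB (m : ℕ) (a : ℕ → ℕ) (l : ℕ → ℕ) : Prop :=
  ∀ i, 2 ≤ i → i ≤ m → l i ≤ dseq a (i - 1) / dseq a i - 1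

lemma dseq_pos (a : ℕ → ℕ) (ha : 0 < a 1) {m : ℕ} (hm : 1 ≤ m) : 0 < dseq a m := by
  rcases Nat.eq_zero_or_pos (dseq a m) with h | h
  · have := Finset.gcd_eq_zero_iff.mp h 1 (by simp [Finset.mem_Icc, hm])
    omega
  · exact h

lemma dseq_succ (a : ℕ → ℕ) (m : ℕ) :
    dseq a (m + 1) = Nat.gcd (a (m + 1)) (dseq a m) := by
  unfold dseq
  rw [show Finset.Icc 1 (m + 1) = insert (m + 1) (Finset.Icc 1 m) by
      ext j; simp [Finset.mem_Icc]; omega, Finset.gcd_insert]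
  rfl

lemma dseq_dvd (a : ℕ → ℕ) {m j : ℕ} (h1 : 1 ≤ j) (h2 : j ≤ m) :
    dseq a m ∣ a j := Finset.gcd_dvd (by simp [Finset.mem_Icc]; omega)

lemma dseq_succ_dvd (a : ℕ → ℕ) (m : ℕ) : dseq a (m + 1) ∣ dseq a m := by
  rw [dseq_succ]; exact Nat.gcd_dvd_right _ _

lemma dseq_succ_dvd' (a : ℕ → ℕ) (m : ℕ) : dseq a (m + 1) ∣ a (m + 1) := by
  rw [dseq_succ]; exact Nat.gcd_dvd_left _ _

/-- Existence of a representation in B. -/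
lemma exists_rep : ∀ m : ℕ, 1 ≤ m → ∀ a : ℕ → ℕ,
    (∀ i, 1 ≤ i → i ≤ m → 0 < a i) → Telescopic m a → ∀ x : ℕ → ℕ,
    ∃ k : ℕ → ℕ, InB m a k ∧
      ∑ i ∈ Finset.Icc 1 m, a i * x i = ∑ i ∈ Finset.Icc 1 m, a i * k i := by
  intro m hm
  induction m, hm using Nat.le_induction with
  | base =>
    intro a _ _ x
    exact ⟨x, fun i h2 h1 => by omega, rfl⟩
  | succ m hm ih =>
    intro a hpos htel x
    have hDpos : 0 < dseq a m := dseq_pos a (hpos 1 le_rfl (by omega)) hm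
    have hgD : dseq a (m + 1) ∣ dseq a m := dseq_succ_dvd a m
    have hga : dseq a (m + 1) ∣ a (m + 1) := dseq_succ_dvd' a m
    have hgpos : 0 < dseq a (m + 1) := dseq_pos a (hpos 1 le_rfl (by omega)) (by omega)
    have hcpos : 0 < dseq a m / dseq a (m + 1) :=
      Nat.div_pos (Nat.le_of_dvd hDpos hgD) hgpos
    obtain ⟨k0, hk0⟩ := htel (m + 1) (by omega) le_rfl
    simp only [Nat.add_sub_cancel] at hk0
    have key : a (m + 1) * (dseq a m / dseq a (m + 1))
        = ∑ j ∈ Finset.Icc 1 m, a j * k0 j := by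
      obtain ⟨A, hA⟩ := hga
      obtain ⟨C, hC⟩ := hgD
      have h2 : A = a (m + 1) / dseq a (m + 1) := by
        rw [hA, Nat.mul_div_cancel_left _ hgpos]
      have h1 : a (m + 1) * (dseq a m / dseq a (m + 1)) = dseq a m * A := by
        rw [hA, hC, Nat.mul_div_cancel_left _ hgpos]; ring
      rw [h1, h2, hk0, Finset.mul_sum]
      refine Finset.sum_congr rfl fun j hj => ?_
      simp only [Finset.mem_Icc] at hj
      rw [← mul_assoc, Nat.mul_div_cancel' (dseq_dvd a hj.1 hj.2)]
    set c := dseq a m / dseq a (m + 1) with hc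
    have hrc : x (m + 1) % c < c := Nat.mod_lt _ hcpos
    obtain ⟨k1, hk1B, hk1s⟩ := ih a (fun i h1 h2 => hpos i h1 (by omega))
      (fun i h1 h2 => htel i h1 (by omega)) (fun j => x j + k0 j * (x (m + 1) / c))
    refine ⟨Function.update k1 (m + 1) (x (m + 1) % c), ?_, ?_⟩
    · intro i h2 h1
      by_cases hi : i = m + 1
      · subst hi
        rw [Function.update_self]
        simp only [Nat.add_sub_cancel]
        omega
      · rw [Function.update_of_ne hi]
        exact hk1B i h2 (by omega)
    · rw [Finset.sum_Icc_succ_top (by omega : 1 ≤ m + 1),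
          Finset.sum_Icc_succ_top (by omega : 1 ≤ m + 1)]
      have hrest : ∑ i ∈ Finset.Icc 1 m, a i * Function.update k1 (m + 1) (x (m + 1) % c) i
          = ∑ i ∈ Finset.Icc 1 m, a i * k1 i := by
        refine Finset.sum_congr rfl fun j hj => ?_
        simp only [Finset.mem_Icc] at hj
        rw [Function.update_of_ne (by omega)]
      rw [hrest, Function.update_self, ← hk1s]
      have hsum' : ∑ i ∈ Finset.Icc 1 m, a i * (x i + k0 i * (x (m + 1) / c))
          = (∑ i ∈ Finset.Icc 1 m, a i * x i)
            + a (m + 1) * c * (x (m + 1) / c) := by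
        rw [show a (m + 1) * c * (x (m + 1) / c)
            = (∑ j ∈ Finset.Icc 1 m, a j * k0 j) * (x (m + 1) / c) by rw [key],
          Finset.sum_mul, ← Finset.sum_add_distrib]
        refine Finset.sum_congr rfl fun j hj => by ring
      rw [hsum']
      have hxm : x (m + 1) = c * (x (m + 1) / c) + x (m + 1) % c :=
        (Nat.div_add_mod _ _).symm
      calc (∑ i ∈ Finset.Icc 1 m, a i * x i) + a (m + 1) * x (m + 1)
          = (∑ i ∈ Finset.Icc 1 m, a i * x i)
            + a (m + 1) * (c * (x (m + 1) / c) + x (m + 1) % c) := by rw [← hxm]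
        _ = (∑ i ∈ Finset.Icc 1 m, a i * x i) + a (m + 1) * c * (x (m + 1) / c)
            + a (m + 1) * (x (m + 1) % c) := by ring

/-- Uniqueness of the representation in B. -/
lemma uniq_rep : ∀ m : ℕ, 1 ≤ m → ∀ a : ℕ → ℕ,
    (∀ i, 1 ≤ i → i ≤ m → 0 < a i) → ∀ k k' : ℕ → ℕ,
    InB m a k → InB m a k' →
    ∑ i ∈ Finset.Icc 1 m, a i * k i = ∑ i ∈ Finset.Icc 1 m, a i * k' i →
    ∀ i, 1 ≤ i → i ≤ m → k i = k' i := by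
  intro m hm
  induction m, hm using Nat.le_induction with
  | base =>
    intro a hpos k k' _ _ hsum i h1 h2
    have hi : i = 1 := by omega
    subst hi
    simp only [Finset.Icc_self, Finset.sum_singleton] at hsum
    exact Nat.eq_of_mul_eq_mul_left (hpos 1 le_rfl le_rfl) hsum
  | succ m hm ih =>
    intro a hpos k k' hkB hk'B hsum i h1 h2
    have hDpos : 0 < dseq a m := dseq_pos a (hpos 1 le_rfl (by omega)) hm
    have hgD : dseq a (m + 1) ∣ dseq a m := dseq_succ_dvd a m
    have hga : dseq a (m + 1) ∣ a (m + 1) := dseq_succ_dvd' a m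
    have hgpos : 0 < dseq a (m + 1) := dseq_pos a (hpos 1 le_rfl (by omega)) (by omega)
    have hcpos : 0 < dseq a m / dseq a (m + 1) :=
      Nat.div_pos (Nat.le_of_dvd hDpos hgD) hgpos
    have hkm : k (m + 1) < dseq a m / dseq a (m + 1) := by
      have := hkB (m + 1) (by omega) le_rfl
      simp only [Nat.add_sub_cancel] at this
      omega
    have hk'm : k' (m + 1) < dseq a m / dseq a (m + 1) := by
      have := hk'B (m + 1) (by omega) le_rfl
      simp only [Nat.add_sub_cancel] at this
      omega
    rw [Finset.sum_Icc_succ_top (by omega : 1 ≤ m + 1),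
        Finset.sum_Icc_succ_top (by omega : 1 ≤ m + 1)] at hsum
    have hdvdS : ∀ y : ℕ → ℕ,
        ((dseq a m : ℕ) : ℤ) ∣ ((∑ i ∈ Finset.Icc 1 m, a i * y i : ℕ) : ℤ) := by
      intro y
      push_cast
      refine Finset.dvd_sum fun j hj => ?_
      simp only [Finset.mem_Icc] at hj
      exact Dvd.dvd.mul_right (Int.natCast_dvd_natCast.mpr (dseq_dvd a hj.1 hj.2)) _
    have hDdvd : ((dseq a m : ℕ) : ℤ)
        ∣ (a (m + 1) : ℤ) * ((k (m + 1) : ℤ) - (k' (m + 1) : ℤ)) := by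
      have heq : (a (m + 1) : ℤ) * ((k (m + 1) : ℤ) - (k' (m + 1) : ℤ))
          = ((∑ i ∈ Finset.Icc 1 m, a i * k' i : ℕ) : ℤ)
            - ((∑ i ∈ Finset.Icc 1 m, a i * k i : ℕ) : ℤ) := by
        have h := congrArg (fun z : ℕ => (z : ℤ)) hsum
        push_cast at h ⊢
        linarith
      rw [heq]
      exact dvd_sub (hdvdS k') (hdvdS k)
    have hcdvd : ((dseq a m / dseq a (m + 1) : ℕ) : ℤ)
        ∣ (k (m + 1) : ℤ) - (k' (m + 1) : ℤ) := by
      obtain ⟨A, hA⟩ := hga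
      obtain ⟨C, hC⟩ := hgD
      have hCc : C = dseq a m / dseq a (m + 1) := by
        rw [hC, Nat.mul_div_cancel_left _ hgpos]
      have hAc : A = a (m + 1) / dseq a (m + 1) := by
        rw [hA, Nat.mul_div_cancel_left _ hgpos]
      have h1 : ((dseq a (m + 1) : ℕ) : ℤ) * C
          ∣ ((dseq a (m + 1) : ℕ) : ℤ) * (A * ((k (m + 1) : ℤ) - (k' (m + 1) : ℤ))) := by
        have : ((dseq a (m + 1) : ℕ) : ℤ) * C = ((dseq a m : ℕ) : ℤ) := by
          rw [hC]; push_cast; ring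
        rw [this, ← mul_assoc]
        have : ((dseq a (m + 1) : ℕ) : ℤ) * A = (a (m + 1) : ℤ) := by
          rw [hA]; push_cast; ring
        rw [this]
        exact hDdvd
      have h2 : (C : ℤ) ∣ A * ((k (m + 1) : ℤ) - (k' (m + 1) : ℤ)) :=
        (mul_dvd_mul_iff_left (by exact_mod_cast hgpos.ne' : ((dseq a (m+1) : ℕ) : ℤ) ≠ 0)).mp h1
      have hcop : Nat.Coprime C A := by
        have hgcd : Nat.gcd (a (m + 1)) (dseq a m) = dseq a (m + 1) := (dseq_succ a m).symm
        have := Nat.coprime_div_gcd_div_gcd (m := a (m + 1)) (n := dseq a m)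
          (hgcd ▸ hgpos)
        rw [hgcd, ← hAc, ← hCc] at this
        exact this.symm
      have := (Nat.isCoprime_iff_coprime.mpr hcop).dvd_of_dvd_mul_left h2
      rwa [hCc] at this
    have ht0 : (k (m + 1) : ℤ) - (k' (m + 1) : ℤ) = 0 := by
      refine Int.eq_zero_of_abs_lt_dvd hcdvd ?_
      rw [abs_sub_lt_iff]
      constructor <;> (push_cast; omega)
    have hkk' : k (m + 1) = k' (m + 1) := by omega
    by_cases hi : i = m + 1
    · rw [hi, hkk']
    · have hsum' : ∑ i ∈ Finset.Icc 1 m, a i * k i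
          = ∑ i ∈ Finset.Icc 1 m, a i * k' i := by
        rw [hkk'] at hsum
        omega
      exact ih a (fun i h1 h2 => hpos i h1 (by omega)) k k'
        (fun i h1 h2 => hkB i h1 (by omega)) (fun i h1 h2 => hk'B i h1 (by omega))
        hsum' i h1 (by omega)

/-- For a telescopic sequence, every element `n` of the numerical semigroup
`S = a_1 ℤ_{≥0} + ⋯ + a_m ℤ_{≥0}` has a unique representative `(k_1,…,k_m)`
in `B(A_m)` with `a_1 k_1 + ⋯ + a_m k_m = n` (uniqueness in the coordinates
`1, …, m`). -/
theorem telescopic_unique_representation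
    (m : ℕ) (hm : 2 ≤ m) (a : ℕ → ℕ)
    (hpos : ∀ i, 1 ≤ i → i ≤ m → 0 < a i)
    (hgcd : (Finset.Icc 1 m).gcd a = 1)
    (htel : Telescopic m a)
    (n : ℕ) (hn : ∃ x : ℕ → ℕ, n = ∑ i ∈ Finset.Icc 1 m, a i * x i) :
    ∃ k : ℕ → ℕ, InB m a k ∧ n = ∑ i ∈ Finset.Icc 1 m, a i * k i ∧
      ∀ k' : ℕ → ℕ, InB m a k' → n = ∑ i ∈ Finset.Icc 1 m, a i * k' i →
        ∀ i, 1 ≤ i → i ≤ m → k' i = k i := by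
  obtain ⟨x, hx⟩ := hn
  obtain ⟨k, hkB, hks⟩ := exists_rep m (by omega) a hpos htel x
  refine ⟨k, hkB, hx.trans hks, fun k' hk'B hk's i h1 h2 => ?_⟩
  exact uniq_rep m (by omega) a hpos k' k hk'B hkB
    (hk's.symm.trans (hx.trans hks)) i h1 h2
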